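/- arXiv:2411.10767 — 2 statements merged into one kernel-verified Lean document; each statement's English description precedes it below -/
import Mathlib

section
/- Riedtmann–Peng homological formula: Let A be a finitary abelian category over a finite field and let A, B, C be objects of A. Then g^C_{AB} = (|Ext^1_A(A,B)_C| / |Hom_A(A,B)|) · a_C / (a_A · a_B), where Ext^1_A(A,B)_C denotes the subset of Ext^1_A(A,B) consisting of extension classes whose middle term is isomorphic to C. -/
/-!
STATEMENT 1 (Riedtmann–Peng homological formula).
For a finitary abelian category `A` over a finite field and objects `a b c` of `A`,
`g^c_{a b} = (|Ext¹(a,b)_c| / |Hom(a,b)|) · a_c / (a_a · a_b)`,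
where `Ext¹(a,b)_c` is the set of extension classes of `a` by `b` whose middle term is
isomorphic to `c` (encoded as the set of short exact sequences `0 → b → c → a → 0` up to
the action of automorphisms of the middle term `c`).
-/

open CategoryTheory CategoryTheory.Limits

noncomputable section

namespace GreenDH

/-- `a_X`, the order of the automorphism group of `X`. -/
def autCard {C : Type*} [Category C] (X : C) : ℕ := Nat.card (Aut X)

/-- `|Hom(X, Y)|`. -/
def homCard {C : Type*} [Category C] (X Y : C) : ℕ := Nat.card (X ⟶ Y)

/-- The Hall number `g^c_{a b}`: the number of subobjects of `c` which are isomorphic to `b`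
and whose corresponding quotient of `c` is isomorphic to `a`. -/
def hall {A : Type} [SmallCategory A] [Abelian A] (a b c : A) : ℕ :=
  Nat.card {S : Subobject c // Nonempty ((S : A) ≅ b) ∧ Nonempty ((cokernel S.arrow) ≅ a)}

/-- The set of short exact sequences `0 → b → c → a → 0` with prescribed middle term `c`. -/
def sesSet {A : Type*} [Category A] [Abelian A] (a b c : A) : Type _ :=
  {p : (b ⟶ c) × (c ⟶ a) // ∃ w : p.1 ≫ p.2 = 0, (ShortComplex.mk p.1 p.2 w).ShortExact}

/-- `Ext¹(a, b)_c`: extension classes of `a` by `b` with middle term isomorphic to `c`,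
i.e. short exact sequences `0 → b → c → a → 0` up to isomorphism of extensions
(inducing the identity on `a` and `b`). -/
def extWithMiddle {A : Type*} [Category A] [Abelian A] (a b c : A) : Type _ :=
  Quot (fun (p q : sesSet a b c) =>
    ∃ l : c ≅ c, p.1.1 ≫ l.hom = q.1.1 ∧ l.hom ≫ q.1.2 = p.1.2)

/-- `|Ext¹(a, b)_c|`. -/
def ext1CardWith {A : Type*} [Category A] [Abelian A] (a b c : A) : ℕ :=
  Nat.card (extWithMiddle a b c)

set_option linter.unusedSectionVars false

lemma nat_card_sigma {ι : Type} [Fintype ι] (F : ι → Type*) [∀ i, Finite (F i)] :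
    Nat.card (Sigma F) = ∑ i, Nat.card (F i) := by
  classical
  haveI : ∀ i, Fintype (F i) := fun i => Fintype.ofFinite _
  rw [Nat.card_eq_fintype_card, Fintype.card_sigma]
  exact Finset.sum_congr rfl fun i _ => (Nat.card_eq_fintype_card).symm

section Aux
variable {A : Type} [SmallCategory A] [Abelian A]

@[simp] lemma aut_hom_inv_assoc {X Z : A} (l : Aut X) (f : X ⟶ Z) : l.hom ≫ l.inv ≫ f = f :=
  Iso.hom_inv_id_assoc (l : X ≅ X) f

@[simp] lemma aut_inv_hom_assoc {X Z : A} (l : Aut X) (f : X ⟶ Z) : l.inv ≫ l.hom ≫ f = f :=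
  Iso.inv_hom_id_assoc (l : X ≅ X) f

@[simp] lemma aut_trans_hom {X : A} (m l : Aut X) : (m ≪≫ l).hom = m.hom ≫ l.hom := rfl

@[simp] lemma aut_trans_inv {X : A} (m l : Aut X) : (m ≪≫ l).inv = l.inv ≫ m.inv := rfl

@[simp] lemma aut_trans_hom_left {X Y : A} (α : Aut X) (e : X ≅ Y) :
    (α ≪≫ e).hom = α.hom ≫ e.hom := rfl

@[simp] lemma aut_trans_hom_right {X Y : A} (e : X ≅ Y) (α : Aut Y) :
    (e ≪≫ α).hom = e.hom ≫ α.hom := rfl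
variable (a b c : A)

def autIso (l : Aut c) : c ≅ c := l

instance sesAction : MulAction (Aut c) (sesSet a b c) where
  smul l p := ⟨(p.1.1 ≫ l.hom, l.inv ≫ p.1.2), by
    obtain ⟨w, hw⟩ := p.2
    refine ⟨by simp [w], ?_⟩
    exact ShortComplex.shortExact_of_iso
      (ShortComplex.isoMk (Iso.refl b) (autIso c l) (Iso.refl a)
        (by simp [autIso]) (by simp [autIso])) hw⟩
  one_smul p := by
    apply Subtype.ext
    show (p.1.1 ≫ _, _ ≫ p.1.2) = p.1
    simp [show (1 : Aut c) = Iso.refl c from rfl]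
  mul_smul l m p := by
    apply Subtype.ext
    show (p.1.1 ≫ (l*m).hom, (l*m).inv ≫ p.1.2)
      = ((p.1.1 ≫ m.hom) ≫ l.hom, l.inv ≫ (m.inv ≫ p.1.2))
    simp [Aut.Aut_mul_def]

lemma smul_def (l : Aut c) (p : sesSet a b c) :
    (l • p).1 = (p.1.1 ≫ l.hom, l.inv ≫ p.1.2) := rfl

lemma smul_eq_iff (l : Aut c) (p : sesSet a b c) :
    l • p = p ↔ p.1.1 ≫ l.hom = p.1.1 ∧ l.hom ≫ p.1.2 = p.1.2 := by
  refine Subtype.ext_iff.trans ?_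
  rw [smul_def, Prod.ext_iff]
  constructor
  · rintro ⟨h1, h2⟩
    refine ⟨h1, ?_⟩
    conv_lhs => rw [← h2]
    simp
  · rintro ⟨h1, h2⟩
    refine ⟨h1, ?_⟩
    conv_lhs => rw [← h2]
    simp

lemma card_stabilizer (p : sesSet a b c) :
    Nat.card (MulAction.stabilizer (Aut c) p) = homCard a b := by
  obtain ⟨w, hw⟩ := p.2
  set f := p.1.1 with hf
  set g := p.1.2 with hg
  haveI := hw.mono_f
  haveI := hw.epi_g
  have hd : ∀ v v' : a ⟶ b, (g ≫ v ≫ f) ≫ (g ≫ v' ≫ f) = 0 := fun v v' => by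
    simp only [Category.assoc, reassoc_of% w, zero_comp, comp_zero]
  let Ψ : (a ⟶ b) → MulAction.stabilizer (Aut c) p :=
    fun v => ⟨⟨𝟙 c + g ≫ v ≫ f, 𝟙 c - g ≫ v ≫ f,
      by simp [Preadditive.comp_sub, Preadditive.add_comp, hd v v],
      by simp [Preadditive.sub_comp, Preadditive.comp_add, hd v v]⟩, by
      refine (smul_eq_iff a b c _ p).2 ?_
      constructor
      · show f ≫ (𝟙 c + g ≫ v ≫ f) = f
        simp [Preadditive.comp_add, reassoc_of% w]
      · show (𝟙 c + g ≫ v ≫ f) ≫ g = g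
        simp [Preadditive.add_comp, w]⟩
  have hbij : Function.Bijective Ψ := by
    constructor
    · intro v v' h
      have h3 := Subtype.ext_iff.1 h
      have h4 : (𝟙 c + g ≫ v ≫ f) = (𝟙 c + g ≫ v' ≫ f) := congrArg Iso.hom h3
      have h2 : g ≫ v ≫ f = g ≫ v' ≫ f := add_left_cancel h4
      rw [cancel_epi g, cancel_mono f] at h2
      exact h2
    · rintro ⟨l, hl⟩
      rw [MulAction.mem_stabilizer_iff, smul_eq_iff] at hl
      obtain ⟨h1, h2⟩ := hl
      have hfd : f ≫ (l.hom - 𝟙 c) = 0 := by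
        simp only [Preadditive.comp_sub, Category.comp_id]
        rw [show f ≫ l.hom = f from h1]
        simp
      obtain ⟨u, hu⟩ := CokernelCofork.IsColimit.desc' hw.gIsCokernel (l.hom - 𝟙 c) hfd
      have hu : g ≫ u = l.hom - 𝟙 c := hu
      have hug : u ≫ g = 0 := by
        rw [← cancel_epi g, reassoc_of% hu]
        simp only [Preadditive.sub_comp, Category.id_comp]
        rw [show l.hom ≫ g = g from h2]
        simp
      obtain ⟨v, hv⟩ := KernelFork.IsLimit.lift' hw.fIsKernel u hug
      have hv : v ≫ f = u := hv
      refine ⟨v, ?_⟩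
      apply Subtype.ext
      apply Iso.ext
      show 𝟙 c + g ≫ v ≫ f = l.hom
      rw [hv, hu]
      abel
  calc Nat.card (MulAction.stabilizer (Aut c) p)
      = Nat.card (a ⟶ b) := (Nat.card_congr (Equiv.ofBijective Ψ hbij)).symm
    _ = homCard a b := rfl


lemma finite_iso (X Y : A) (h : Finite (X ⟶ Y)) : Finite (X ≅ Y) :=
  Finite.of_injective (fun i => i.hom) fun _ _ h => Iso.ext h

lemma myrel_iff (p q : sesSet a b c) :
    (∃ l : c ≅ c, p.1.1 ≫ l.hom = q.1.1 ∧ l.hom ≫ q.1.2 = p.1.2) ↔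
      ∃ l : Aut c, l • p = q := by
  constructor
  · rintro ⟨l, h1, h2⟩
    refine ⟨show Aut c from l, Subtype.ext ?_⟩
    rw [smul_def]
    refine Prod.ext h1 ?_
    show l.inv ≫ p.1.2 = q.1.2
    rw [← h2]
    simp
  · rintro ⟨l, rfl⟩
    refine ⟨show c ≅ c from l, rfl, ?_⟩
    show l.hom ≫ (l • p).1.2 = p.1.2
    rw [smul_def]
    simp

def extOrbitEquiv : extWithMiddle a b c ≃
    MulAction.orbitRel.Quotient (Aut c) (sesSet a b c) where
  toFun := Quot.lift (fun p => Quotient.mk'' p) (fun p q h => by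
    obtain ⟨l, hl⟩ := (myrel_iff a b c p q).1 h
    exact (Quotient.sound' (MulAction.mem_orbit_iff.2 ⟨l, hl⟩)).symm)
  invFun := fun x => _root_.Quotient.liftOn' x (fun p => Quot.mk _ p) (fun p q h => by
    obtain ⟨l, hl⟩ := MulAction.mem_orbit_iff.1 ((MulAction.orbitRel_apply).1 h)
    exact (Quot.sound ((myrel_iff a b c q p).2 ⟨l, hl⟩)).symm)
  left_inv := by
    intro x
    induction x using Quot.ind
    rfl
  right_inv := by
    intro x
    induction x using Quotient.inductionOn'
    rfl

lemma key2 (hfinHom : ∀ X Y : A, Finite (X ⟶ Y)) :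
    Nat.card (sesSet a b c) * homCard a b = ext1CardWith a b c * autCard c := by
  classical
  haveI : Finite ((b ⟶ c) × (c ⟶ a)) := by
    haveI := hfinHom b c; haveI := hfinHom c a; infer_instance
  haveI : Finite (sesSet a b c) :=
    Finite.of_injective (fun p => p.1) Subtype.val_injective
  haveI : Finite (Aut c) := finite_iso c c (hfinHom c c)
  haveI := Fintype.ofFinite (sesSet a b c)
  haveI : Fintype (MulAction.orbitRel.Quotient (Aut c) (sesSet a b c)) :=
    Fintype.ofFinite _
  have horb : ∀ ω : MulAction.orbitRel.Quotient (Aut c) (sesSet a b c),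
      Nat.card ω.orbit * homCard a b = autCard c := by
    intro ω
    rw [MulAction.orbitRel.Quotient.orbit_eq_orbit_out ω Quotient.out_eq',
      ← card_stabilizer a b c ω.out, ← Nat.card_prod]
    exact Nat.card_congr (MulAction.orbitProdStabilizerEquivGroup (Aut c) ω.out)
  calc Nat.card (sesSet a b c) * homCard a b
      = (∑ ω : MulAction.orbitRel.Quotient (Aut c) (sesSet a b c),
          Nat.card ω.orbit) * homCard a b := by
        rw [Nat.card_congr (MulAction.selfEquivSigmaOrbits' (Aut c) (sesSet a b c)),
          Nat.card_eq_fintype_card, Fintype.card_sigma]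
        congr 1
        exact Finset.sum_congr rfl fun ω _ => (Nat.card_eq_fintype_card).symm
    _ = ∑ ω : MulAction.orbitRel.Quotient (Aut c) (sesSet a b c),
          (Nat.card ω.orbit * homCard a b) := by rw [Finset.sum_mul]
    _ = ∑ _ω : MulAction.orbitRel.Quotient (Aut c) (sesSet a b c), autCard c := by
        exact Finset.sum_congr rfl fun ω _ => horb ω
    _ = Fintype.card (MulAction.orbitRel.Quotient (Aut c) (sesSet a b c)) * autCard c := by
        rw [Finset.sum_const, Finset.card_univ, smul_eq_mul]
    _ = ext1CardWith a b c * autCard c := by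
        rw [← Nat.card_eq_fintype_card,
          ← Nat.card_congr (extOrbitEquiv a b c)]
        rfl


lemma card_iso_left {X Y : A} (e : X ≅ Y) : Nat.card (X ≅ Y) = autCard X :=
  Nat.card_congr ⟨fun i => i ≪≫ e.symm, fun α => α ≪≫ e,
    fun i => Iso.ext (by simp), fun α => Iso.ext (by simp)⟩

lemma card_iso_right {X Y : A} (e : X ≅ Y) : Nat.card (X ≅ Y) = autCard Y :=
  Nat.card_congr ⟨fun i => e.symm ≪≫ i, fun α => e ≪≫ α,
    fun i => Iso.ext (by simp), fun α => Iso.ext (by simp)⟩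

lemma key1 (hfinHom : ∀ X Y : A, Finite (X ⟶ Y)) :
    Nat.card (sesSet a b c) = hall a b c * (autCard a * autCard b) := by
  classical
  let T := {S : Subobject c // Nonempty ((S : A) ≅ b) ∧ Nonempty ((cokernel S.arrow) ≅ a)}
  let F : T → Type := fun S => ((b ≅ (S.1 : A)) × (cokernel S.1.arrow ≅ a))
  let Φ : Sigma F → sesSet a b c := fun x =>
    ⟨(x.2.1.hom ≫ x.1.1.arrow, cokernel.π x.1.1.arrow ≫ x.2.2.hom), by
      refine ⟨by simp, ?_⟩
      have base : (ShortComplex.mk x.1.1.arrow (cokernel.π x.1.1.arrow)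
          (cokernel.condition _)).ShortExact :=
        { exact := ShortComplex.exact_of_g_is_cokernel _ (cokernelIsCokernel _) }
      exact ShortComplex.shortExact_of_iso
        (ShortComplex.isoMk x.2.1.symm (Iso.refl c) x.2.2 (by simp) (by simp)) base⟩
  have hinj : Function.Injective Φ := by
    rintro ⟨S, e, e'⟩ ⟨S', ee, ee'⟩ h
    replace h := Prod.ext_iff.1 (Subtype.ext_iff.1 h)
    obtain ⟨h1, h2⟩ := h
    have hS : S = S' := by
      apply Subtype.ext
      calc S.1 = Subobject.mk (e.hom ≫ S.1.arrow) :=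
            ((Subobject.mk_eq_mk_of_comm _ S.1.arrow e rfl).trans (Subobject.mk_arrow S.1)).symm
        _ = Subobject.mk (ee.hom ≫ S'.1.arrow) :=
            Subobject.mk_eq_mk_of_comm _ _ (Iso.refl b) (by simpa using h1.symm)
        _ = S'.1 := (Subobject.mk_eq_mk_of_comm _ S'.1.arrow ee rfl).trans (Subobject.mk_arrow S'.1)
    subst hS
    have he : e = ee := Iso.ext (by rwa [cancel_mono S.1.arrow] at h1)
    have he' : e' = ee' := Iso.ext (by rwa [cancel_epi (cokernel.π S.1.arrow)] at h2)
    rw [he, he']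
  have hsurj : Function.Surjective Φ := by
    intro p
    obtain ⟨w, hw⟩ := p.2
    haveI : Mono p.1.1 := hw.mono_f
    haveI : Epi p.1.2 := hw.epi_g
    have h1 : (Subobject.mk p.1.1).arrow ≫ p.1.2 = 0 := by
      rw [← Subobject.underlyingIso_hom_comp_eq_mk, Category.assoc, w, comp_zero]
    have h2 : p.1.1 ≫ cokernel.π (Subobject.mk p.1.1).arrow = 0 := by
      calc p.1.1 ≫ cokernel.π (Subobject.mk p.1.1).arrow
          = ((Subobject.underlyingIso p.1.1).inv ≫ (Subobject.mk p.1.1).arrow) ≫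
              cokernel.π (Subobject.mk p.1.1).arrow := by
            rw [Subobject.underlyingIso_arrow]
        _ = 0 := by rw [Category.assoc, cokernel.condition, comp_zero]
    obtain ⟨inv', hinv⟩ := CokernelCofork.IsColimit.desc' hw.gIsCokernel
      (cokernel.π (Subobject.mk p.1.1).arrow) h2
    have hinv : p.1.2 ≫ inv' = cokernel.π (Subobject.mk p.1.1).arrow := hinv
    let e' : cokernel (Subobject.mk p.1.1).arrow ≅ a :=
      { hom := cokernel.desc _ p.1.2 h1
        inv := inv'
        hom_inv_id := by
          rw [← cancel_epi (cokernel.π (Subobject.mk p.1.1).arrow)]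
          rw [cokernel.π_desc_assoc, hinv, Category.comp_id]
        inv_hom_id := by
          rw [← cancel_epi p.1.2, reassoc_of% hinv, cokernel.π_desc, Category.comp_id] }
    refine ⟨⟨⟨Subobject.mk p.1.1, ⟨Subobject.underlyingIso p.1.1⟩, ⟨e'⟩⟩,
      (Subobject.underlyingIso p.1.1).symm, e'⟩, ?_⟩
    apply Subtype.ext
    apply Prod.ext
    · show (Subobject.underlyingIso p.1.1).inv ≫ (Subobject.mk p.1.1).arrow = p.1.1
      exact Subobject.underlyingIso_arrow p.1.1
    · show cokernel.π (Subobject.mk p.1.1).arrow ≫ cokernel.desc _ p.1.2 h1 = p.1.2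
      exact cokernel.π_desc _ _ _
  haveI : Finite ((b ⟶ c) × (c ⟶ a)) := by
    haveI := hfinHom b c; haveI := hfinHom c a; infer_instance
  haveI : Finite (sesSet a b c) :=
    Finite.of_injective (fun p => p.1) Subtype.val_injective
  haveI hFE : Finite (Sigma F) :=
    Finite.of_injective Φ hinj
  haveI : Finite T := Finite.of_injective
    (fun S => (⟨S, S.2.1.some.symm, S.2.2.some⟩ : Sigma F))
    (fun S S' h => congrArg Sigma.fst h)
  haveI : Fintype T := Fintype.ofFinite T
  haveI : ∀ S : T, Finite (F S) := fun S => by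
    haveI : Finite (b ≅ (S.1 : A)) := finite_iso _ _ (hfinHom _ _)
    haveI : Finite (cokernel S.1.arrow ≅ a) := finite_iso _ _ (hfinHom _ _)
    show Finite (_ × _)
    infer_instance
  calc Nat.card (sesSet a b c)
      = Nat.card (Sigma F) :=
        (Nat.card_congr (Equiv.ofBijective Φ ⟨hinj, hsurj⟩)).symm
    _ = ∑ S : T, Nat.card (F S) := nat_card_sigma F
    _ = ∑ _S : T, (autCard a * autCard b) := by
        refine Finset.sum_congr rfl fun S _ => ?_
        show Nat.card (_ × _) = _
        rw [Nat.card_prod, card_iso_left S.2.1.some.symm, card_iso_right S.2.2.some]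
        ring
    _ = Fintype.card T * (autCard a * autCard b) := by
        rw [Finset.sum_const, Finset.card_univ, smul_eq_mul]
    _ = hall a b c * (autCard a * autCard b) := by
        rw [← Nat.card_eq_fintype_card]
        rfl

end Aux

/-- **Riedtmann–Peng formula.** -/
theorem riedtmann_peng_formula
    (k : Type) [Field k] [Fintype k]
    (A : Type) [SmallCategory A] [Abelian A] [CategoryTheory.Linear k A]
    [HasExt.{0} A]
    -- finitary: finite Hom-sets and finite Ext¹-groups
    (hfinHom : ∀ X Y : A, Finite (X ⟶ Y))
    (hfinExt : ∀ X Y : A, Finite (Abelian.Ext X Y 1))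
    (a b c : A) :
    (hall a b c : ℚ) =
      ((ext1CardWith a b c : ℚ) / (homCard a b : ℚ)) *
        (autCard c : ℚ) / ((autCard a : ℚ) * (autCard b : ℚ)) := by
  have k1 := key1 a b c hfinHom
  have k2 := key2 a b c hfinHom
  have keyN : hall a b c * (autCard a * autCard b) * homCard a b
      = ext1CardWith a b c * autCard c := by
    rw [← k1]; exact k2
  haveI : Finite (a ⟶ b) := hfinHom a b
  haveI : Nonempty (a ⟶ b) := ⟨0⟩
  haveI : Finite (Aut a) := finite_iso a a (hfinHom a a)
  haveI : Finite (Aut b) := finite_iso b b (hfinHom b b)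
  have hhom : (homCard a b : ℚ) ≠ 0 := by
    have : homCard a b ≠ 0 := (Nat.card_pos (α := (a ⟶ b))).ne'
    exact_mod_cast this
  have hAa : (autCard a : ℚ) ≠ 0 := by
    have : autCard a ≠ 0 := (Nat.card_pos (α := Aut a)).ne'
    exact_mod_cast this
  have hAb : (autCard b : ℚ) ≠ 0 := by
    have : autCard b ≠ 0 := (Nat.card_pos (α := Aut b)).ne'
    exact_mod_cast this
  have keyQ : (hall a b c : ℚ) * (autCard a * autCard b) * homCard a b
      = ext1CardWith a b c * autCard c := by exact_mod_cast keyN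
  field_simp
  linear_combination keyQ

end GreenDH
end
end

section
/- Let A be a finitary abelian category over a finite field, t an odd positive integer, and fix objects A_1^i, A_2^i, X^i, S^i, M^i, N^i of A for each i ∈ Z_t. Let T be the set of tuples (f_1^•, g_1^•, f_2^•, g_2^•, f_3^•, g_3^•) where for each i ∈ Z_t the sequences 0 → S^i →^{f_1^i} A_2^i →^{g_1^i} N^i → 0, 0 → N^i →^{f_2^i} X^i →^{g_2^i} M^i → 0, and 0 → M^i →^{f_3^i} A_1^i →^{g_3^i} S^{i+1} → 0 are short exact in A, and let G_{M^•,N^•} be the set of 3t-periodic complexes (m^•, n^•, h^•), with components A_2^i →^{m^i} X^i →^{n^i} A_1^i →^{h^i} A_2^{i+1} for i ∈ Z_t, that are exact and satisfy Im(h^i) ≅ S^{i+1}, Ker(h^i) ≅ M^i, Coker(h^i) ≅ N^{i+1}. Then the map Φ sending (f_1^•,g_1^•,f_2^•,g_2^•,f_3^•,g_3^•) to (f_2^• g_1^•, f_3^• g_2^•, f_1^{•+1} g_3^•) is a surjection T ↠ G_{M^•,N^•}, and |T| = ∏_{i∈Z_t} g^{A_1^i}_{S^{i+1} M^i} g^{X^i}_{M^i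 N^i} g^{A_2^i}_{N^i S^i} · a_{M^i}^2 a_{N^i}^2 a_{S^i}^2 while |G_{M^•,N^•}| = ∏_{i∈Z_t} g^{A_1^i}_{S^{i+1} M^i} g^{X^i}_{M^i N^i} g^{A_2^i}_{N^i S^i} · a_{M^i} a_{N^i} a_{S^i}. -/
/-!
STATEMENT 15.
Counting triples of short exact sequences versus exact `3t`-periodic complexes.
For fixed objects `A₁^i, A₂^i, X^i, S^i, M^i, N^i` (`i ∈ Z_t`), the natural map `Φ`
from the set `T` of triples of short exact sequences to the set `G_{M,N}` of exact
`3t`-periodic complexes with prescribed images, kernels and cokernels is surjective,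
and `|T|` and `|G_{M,N}|` are given by products of Hall numbers and automorphism counts.
-/

open CategoryTheory CategoryTheory.Limits

noncomputable section

namespace GreenDH

/-- `0 ⟶ · ⟶f · ⟶g · ⟶ 0` is a short exact sequence. -/
def sesProp {A : Type} [SmallCategory A] [Abelian A] {X Y Z : A}
    (f : X ⟶ Y) (g : Y ⟶ Z) : Prop :=
  ∃ w : f ≫ g = 0, (ShortComplex.mk f g w).ShortExact

/-- the pair `(f, g)` is exact at the middle object. -/
def exactProp {A : Type} [SmallCategory A] [Abelian A] {X Y Z : A}
    (f : X ⟶ Y) (g : Y ⟶ Z) : Prop :=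
  ∃ w : f ≫ g = 0, (ShortComplex.mk f g w).Exact

variable {A : Type} [SmallCategory A] [Abelian A] {t : ℕ}

/-- A triple of short exact sequences
`0 → S^i → A₂^i → N^i → 0`, `0 → N^i → X^i → M^i → 0`, `0 → M^i → A₁^i → S^{i+1} → 0`. -/
structure TripleSES (A1 A2 X S M N : ZMod t → A) (i : ZMod t) where
  f1 : S i ⟶ A2 i
  g1 : A2 i ⟶ N i
  f2 : N i ⟶ X i
  g2 : X i ⟶ M i
  f3 : M i ⟶ A1 i
  g3 : A1 i ⟶ S (i + 1)
  ses1 : sesProp f1 g1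
  ses2 : sesProp f2 g2
  ses3 : sesProp f3 g3

/-- The set `T` of the statement. -/
def TT (A1 A2 X S M N : ZMod t → A) : Type _ := ∀ i : ZMod t, TripleSES A1 A2 X S M N i

/-- One period `A₂^i ⟶m X^i ⟶n A₁^i ⟶h A₂^{i+1}` of a `3t`-periodic complex. -/
structure RawTriple (A1 A2 X : ZMod t → A) (i : ZMod t) where
  m : A2 i ⟶ X i
  n : X i ⟶ A1 i
  h : A1 i ⟶ A2 (i + 1)

/-- `3t`-periodic sequences of composable morphisms. -/
def Raw (A1 A2 X : ZMod t → A) : Type _ := ∀ i : ZMod t, RawTriple A1 A2 X i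

/-- The set `G_{M^•,N^•}` of exact `3t`-periodic complexes with
`Im(h^i) ≅ S^{i+1}`, `Ker(h^i) ≅ M^i`, `Coker(h^i) ≅ N^{i+1}`. -/
def GSet (A1 A2 X S M N : ZMod t → A) : Set (Raw A1 A2 X) :=
  {r | (∀ i : ZMod t,
          exactProp (r i).m (r i).n ∧ exactProp (r i).n (r i).h ∧
            exactProp (r i).h (r (i + 1)).m) ∧
       (∀ i : ZMod t,
          Nonempty (Limits.image (r i).h ≅ S (i + 1)) ∧
            Nonempty (kernel (r i).h ≅ M i) ∧
            Nonempty (cokernel (r i).h ≅ N (i + 1)))}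

/-- The map `Φ` sending a triple of short exact sequences to the associated
`3t`-periodic complex `(f₂ g₁, f₃ g₂, f₁ g₃)`. -/
def Phi (A1 A2 X S M N : ZMod t → A) (p : TT A1 A2 X S M N) : Raw A1 A2 X :=
  fun i => ⟨(p i).g1 ≫ (p i).f2, (p i).g2 ≫ (p i).f3, (p i).g3 ≫ (p (i + 1)).f1⟩

/-! ## Generalities -/

section Tools

lemma sesProp_mono {X Y Z : A} {f : X ⟶ Y} {g : Y ⟶ Z} (h : sesProp f g) : Mono f := by
  obtain ⟨w, h⟩ := h; exact h.mono_f

lemma sesProp_epi {X Y Z : A} {f : X ⟶ Y} {g : Y ⟶ Z} (h : sesProp f g) : Epi g := by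
  obtain ⟨w, h⟩ := h; exact h.epi_g

lemma sesProp_exactProp {X Y Z : A} {f : X ⟶ Y} {g : Y ⟶ Z} (h : sesProp f g) :
    exactProp f g := by
  obtain ⟨w, h⟩ := h; exact ⟨w, h.exact⟩

lemma sesProp_zero {X Y Z : A} {f : X ⟶ Y} {g : Y ⟶ Z} (h : sesProp f g) : f ≫ g = 0 :=
  h.choose

lemma exactProp_epi_comp_iff {B' B C D : A} (e : B' ⟶ B) [Epi e] (f : B ⟶ C) (g : C ⟶ D) :
    exactProp (e ≫ f) g ↔ exactProp f g := by
  have hw : (e ≫ f) ≫ g = 0 ↔ f ≫ g = 0 := by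
    rw [Category.assoc, ← cancel_epi e, comp_zero]
  constructor
  · rintro ⟨w, hx⟩
    refine ⟨hw.1 w, ?_⟩
    exact (ShortComplex.exact_iff_of_epi_of_isIso_of_mono
      (S₁ := ShortComplex.mk (e ≫ f) g w) (S₂ := ShortComplex.mk f g (hw.1 w))
      { τ₁ := e, τ₂ := 𝟙 _, τ₃ := 𝟙 _ }).1 hx
  · rintro ⟨w, hx⟩
    refine ⟨hw.2 w, ?_⟩
    exact (ShortComplex.exact_iff_of_epi_of_isIso_of_mono
      (S₁ := ShortComplex.mk (e ≫ f) g (hw.2 w)) (S₂ := ShortComplex.mk f g w)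
      { τ₁ := e, τ₂ := 𝟙 _, τ₃ := 𝟙 _ }).2 hx

lemma exactProp_comp_mono_iff {B C D D' : A} (f : B ⟶ C) (g : C ⟶ D) (m : D ⟶ D') [Mono m] :
    exactProp f (g ≫ m) ↔ exactProp f g := by
  have hw : f ≫ g ≫ m = 0 ↔ f ≫ g = 0 := by
    rw [← Category.assoc, ← cancel_mono m, zero_comp]
  constructor
  · rintro ⟨w, hx⟩
    refine ⟨hw.1 w, ?_⟩
    exact (ShortComplex.exact_iff_of_epi_of_isIso_of_mono
      (S₁ := ShortComplex.mk f g (hw.1 w)) (S₂ := ShortComplex.mk f (g ≫ m) w)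
      { τ₁ := 𝟙 _, τ₂ := 𝟙 _, τ₃ := m }).2 hx
  · rintro ⟨w, hx⟩
    refine ⟨hw.2 w, ?_⟩
    exact (ShortComplex.exact_iff_of_epi_of_isIso_of_mono
      (S₁ := ShortComplex.mk f g w) (S₂ := ShortComplex.mk f (g ≫ m) (hw.2 w))
      { τ₁ := 𝟙 _, τ₂ := 𝟙 _, τ₃ := m }).1 hx

/-- conjugation invariance of `sesProp`. -/
lemma sesProp_conj {X Y Z X' Y' Z' : A} {f : X ⟶ Y} {g : Y ⟶ Z} (h : sesProp f g)
    (a : X' ≅ X) (b : Y ≅ Y') (c : Z ≅ Z') :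
    sesProp (a.hom ≫ f ≫ b.hom) (b.inv ≫ g ≫ c.hom) := by
  obtain ⟨w, hse⟩ := h
  have w' : (a.hom ≫ f ≫ b.hom) ≫ (b.inv ≫ g ≫ c.hom) = 0 := by
    simp [reassoc_of% w, w]
  refine ⟨w', ?_⟩
  refine ShortComplex.shortExact_of_iso
    (e := ShortComplex.isoMk (S₁ := ShortComplex.mk f g w)
      (S₂ := ShortComplex.mk (a.hom ≫ f ≫ b.hom) (b.inv ≫ g ≫ c.hom) w')
      a.symm b c ?_ ?_) hse
  · simp
  · simp

lemma exactProp_conj {X Y Z X' Y' Z' : A} {f : X ⟶ Y} {g : Y ⟶ Z} (h : exactProp f g)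
    (a : X' ≅ X) (b : Y ≅ Y') (c : Z ≅ Z') :
    exactProp (a.hom ≫ f ≫ b.hom) (b.inv ≫ g ≫ c.hom) := by
  obtain ⟨w, hse⟩ := h
  have w' : (a.hom ≫ f ≫ b.hom) ≫ (b.inv ≫ g ≫ c.hom) = 0 := by
    simp [reassoc_of% w, w]
  refine ⟨w', ?_⟩
  refine (ShortComplex.exact_iff_of_iso
    (ShortComplex.isoMk (S₁ := ShortComplex.mk f g w)
      (S₂ := ShortComplex.mk (a.hom ≫ f ≫ b.hom) (b.inv ≫ g ≫ c.hom) w')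
      a.symm b c ?_ ?_)).1 hse
  · simp
  · simp

/-- `0 → B → C → coker → 0`. -/
lemma sesProp_cokernel {B C : A} (f : B ⟶ C) [Mono f] : sesProp f (cokernel.π f) :=
  ⟨cokernel.condition f, { exact := ShortComplex.exact_cokernel f }⟩

lemma exactProp_kernel {C D : A} (g : C ⟶ D) : exactProp (kernel.ι g) g :=
  ⟨kernel.condition g, ShortComplex.exact_kernel g⟩

/-- image ι and cokernel π form a short exact sequence. -/
lemma sesProp_image_cokernel {B C : A} (h : B ⟶ C) :
    sesProp (Limits.image.ι h) (cokernel.π h) := by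
  have hx : exactProp (Limits.image.ι h) (cokernel.π h) := by
    rw [← exactProp_epi_comp_iff (factorThruImage h)]
    rw [show factorThruImage h ≫ Limits.image.ι h = h from image.fac h]
    exact ⟨cokernel.condition h, ShortComplex.exact_cokernel h⟩
  obtain ⟨w, hx⟩ := hx
  exact ⟨w, { exact := hx }⟩

/-- kernel ι and factorThruImage: `0 → ker h → C → im h → 0`. -/
lemma sesProp_kernel_image {C D : A} (h : C ⟶ D) :
    sesProp (kernel.ι h) (factorThruImage h) := by
  have hx : exactProp (kernel.ι h) (factorThruImage h) := by
    rw [← exactProp_comp_mono_iff _ _ (Limits.image.ι h)]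
    rw [show factorThruImage h ≫ Limits.image.ι h = h from image.fac h]
    exact exactProp_kernel h
  obtain ⟨w, hx⟩ := hx
  have : Epi (factorThruImage h) := inferInstance
  exact ⟨w, { exact := hx }⟩

/-- `g` is a cokernel of `f` whenever `(f,g)` is a SES. -/
def sesProp_gIsCokernel {B C Z : A} {f : B ⟶ C} {g : C ⟶ Z} (h : sesProp f g) :
    IsColimit (CokernelCofork.ofπ g (h.choose)) :=
  letI := h.choose_spec.epi_g
  h.choose_spec.exact.gIsCokernel

/-- `f` is a kernel of `g` whenever `(f,g)` is a SES. -/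
def sesProp_fIsKernel {B C Z : A} {f : B ⟶ C} {g : C ⟶ Z} (h : sesProp f g) :
    IsLimit (KernelFork.ofι f (h.choose)) :=
  letI := h.choose_spec.mono_f
  h.choose_spec.exact.fIsKernel

/-- uniqueness of epi-mono factorizations through the same middle object. -/
lemma exists_factor_iso {B N C : A} {g g' : B ⟶ N} {f f' : N ⟶ C}
    [Epi g] [Epi g'] [Mono f] [Mono f'] (hc : g ≫ f = g' ≫ f') :
    ∃ e : N ≅ N, g' = g ≫ e.hom ∧ f' = e.inv ≫ f := by
  haveI : StrongEpi g := strongEpi_of_epi g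
  haveI : StrongEpi g' := strongEpi_of_epi g'
  set c := g ≫ f with hcdef
  let φ : N ≅ Limits.image c := image.isoStrongEpiMono g f rfl
  let φ' : N ≅ Limits.image c := image.isoStrongEpiMono g' f' hc.symm
  have hφι : φ.hom ≫ Limits.image.ι c = f := image.isoStrongEpiMono_hom_comp_ι g f rfl
  have hφι' : φ'.hom ≫ Limits.image.ι c = f' := image.isoStrongEpiMono_hom_comp_ι g' f' hc.symm
  have hgφ : g ≫ φ.hom = factorThruImage c := by
    rw [← cancel_mono (Limits.image.ι c)]
    rw [Category.assoc, hφι, image.fac]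
  have hgφ' : g' ≫ φ'.hom = factorThruImage c := by
    rw [← cancel_mono (Limits.image.ι c)]
    rw [Category.assoc, hφι', image.fac]
    exact hc.symm
  refine ⟨φ ≪≫ φ'.symm, ?_, ?_⟩
  · rw [Iso.trans_hom, ← Category.assoc, hgφ, Iso.symm_hom, ← hgφ', Category.assoc,
      Iso.hom_inv_id, Category.comp_id]
  · rw [Iso.trans_inv, Iso.symm_inv, Category.assoc, ← hφι, Iso.inv_hom_id_assoc, hφι']

/-- two kernels of "the same" epimorphism differ by an automorphism. -/
lemma exists_kernel_iso {SS B N : A} {f f' : SS ⟶ B} {g : B ⟶ N}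
    (h : sesProp f g) (hz : f' ≫ g = 0) (hm' : Mono f') (hfac : ∀ {W : A} (k : W ⟶ B),
      k ≫ g = 0 → ∃ l : W ⟶ SS, l ≫ f' = k) :
    ∃ e : SS ≅ SS, f' = e.inv ≫ f := by
  haveI := sesProp_mono h
  obtain ⟨u, hu⟩ := KernelFork.IsLimit.lift' (sesProp_fIsKernel h) f' hz
  have hu' : u ≫ f = f' := hu
  have hzf : f ≫ g = 0 := h.choose
  obtain ⟨v, hv⟩ := hfac f hzf
  have huv : u ≫ v = 𝟙 _ := by
    rw [← cancel_mono f']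
    rw [Category.assoc, hv, hu', Category.id_comp]
  have hvu : v ≫ u = 𝟙 _ := by
    rw [← cancel_mono f]
    rw [Category.assoc, hu', hv, Category.id_comp]
  exact ⟨⟨v, u, hvu, huv⟩, hu'.symm⟩

end Tools

/-! ## Counting pairs forming short exact sequences -/

def SesPairs (B Z C : A) : Type := {p : (B ⟶ C) × (C ⟶ Z) // sesProp p.1 p.2}

def HallSet (a b c : A) : Type :=
  {S : Subobject c // Nonempty ((S : A) ≅ b) ∧ Nonempty ((cokernel S.arrow) ≅ a)}

lemma hall_eq (a b c : A) : hall a b c = Nat.card (HallSet a b c) := rfl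

def sesPairsEquiv (B Z C : A) :
    HallSet Z B C × Aut B × Aut Z ≃ SesPairs B Z C := by
  classical
  let u : ∀ s : HallSet Z B C, ((s.1 : A) ≅ B) := fun s => s.2.1.some
  let v : ∀ s : HallSet Z B C, (cokernel s.1.arrow ≅ Z) := fun s => s.2.2.some
  refine Equiv.ofBijective (fun p =>
    ⟨(p.2.1.hom ≫ (u p.1).inv ≫ p.1.1.arrow,
      cokernel.π p.1.1.arrow ≫ (v p.1).hom ≫ p.2.2.hom), ?_⟩) ⟨?_, ?_⟩
  · have := sesProp_conj (sesProp_cokernel p.1.1.arrow)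
      (p.2.1 ≪≫ (u p.1).symm) (Iso.refl _) (v p.1 ≪≫ p.2.2)
    rw [Iso.refl_hom, Iso.refl_inv, Category.comp_id, Category.id_comp] at this
    rw [← Category.assoc p.2.1.hom]
    exact this
  · rintro ⟨s, β, α⟩ ⟨s', β', α'⟩ hEq
    have h1 := congrArg (fun q : SesPairs B Z C => q.1.1) hEq
    have h2 := congrArg (fun q : SesPairs B Z C => q.1.2) hEq
    dsimp only at h1 h2
    have hmono : Mono ((u s).inv ≫ s.1.arrow) := mono_comp _ _
    have hmono' : Mono ((u s').inv ≫ s'.1.arrow) := mono_comp _ _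
    have hs : s = s' := by
      apply Subtype.ext
      haveI : IsIso β.hom := ⟨⟨β.inv, β.hom_inv_id, β.inv_hom_id⟩⟩
      haveI : IsIso β'.hom := ⟨⟨β'.inv, β'.hom_inv_id, β'.inv_hom_id⟩⟩
      have e1 : Subobject.mk (β.hom ≫ (u s).inv ≫ s.1.arrow) = s.1 := by
        conv_rhs => rw [← Subobject.mk_arrow s.1]
        exact Subobject.mk_eq_mk_of_comm (β.hom ≫ (u s).inv ≫ s.1.arrow) s.1.arrow
          (β ≪≫ (u s).symm) (Category.assoc _ _ _)
      have e2 : Subobject.mk (β'.hom ≫ (u s').inv ≫ s'.1.arrow) = s'.1 := by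
        conv_rhs => rw [← Subobject.mk_arrow s'.1]
        exact Subobject.mk_eq_mk_of_comm (β'.hom ≫ (u s').inv ≫ s'.1.arrow) s'.1.arrow
          (β' ≪≫ (u s').symm) (Category.assoc _ _ _)
      rw [← e1, ← e2]
      exact Subobject.mk_eq_mk_of_comm _ _ (Iso.refl _) (by simpa using h1.symm)
    subst hs
    have hβ : β = β' := by
      ext
      have := h1
      rw [← cancel_mono ((u s).inv ≫ s.1.arrow)]
      simpa using this
    have hα : α = α' := by
      ext
      have := h2
      rw [← cancel_epi (cokernel.π s.1.arrow ≫ (v s).hom)]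
      simpa using this
    simp [hβ, hα]
  · rintro ⟨⟨f, g⟩, hses⟩
    haveI : Mono f := sesProp_mono hses
    haveI : Epi g := sesProp_epi hses
    set s0 : Subobject _ := Subobject.mk f with hs0
    have hco : cokernel s0.arrow ≅ Z :=
      cokernelIsoOfEq (Subobject.underlyingIso_hom_comp_eq_mk f).symm ≪≫
        cokernelEpiComp (Subobject.underlyingIso f).hom f ≪≫
        IsColimit.coconePointUniqueUpToIso (cokernelIsCokernel f) (sesProp_gIsCokernel hses)
    set s : HallSet Z B C := ⟨s0, ⟨Subobject.underlyingIso f⟩, ⟨hco⟩⟩ with hsdef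
    have wfa : f ≫ cokernel.π s0.arrow = 0 := by
      rw [← Subobject.underlyingIso_arrow f, Category.assoc, cokernel.condition, comp_zero]
    have hcoker_f : IsColimit (CokernelCofork.ofπ (cokernel.π s0.arrow) wfa) := by
      have := isCokernelEpiComp (cokernelIsCokernel s0.arrow)
        ((Subobject.underlyingIso f).inv) (Subobject.underlyingIso_arrow f).symm
      exact this
    have wq : f ≫ cokernel.π s0.arrow ≫ (v s).hom = 0 := by
      rw [← Category.assoc, wfa, zero_comp]
    have hq : IsColimit (CokernelCofork.ofπ (cokernel.π s0.arrow ≫ (v s).hom)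
        (by simpa using wq)) :=
      IsCokernel.cokernelIso _ _ hcoker_f (v s) rfl
    refine ⟨⟨s, (Subobject.underlyingIso f).symm ≪≫ u s,
      IsColimit.coconePointUniqueUpToIso hq (sesProp_gIsCokernel hses)⟩, ?_⟩
    apply Subtype.ext
    dsimp only
    have hgprop : (cokernel.π s0.arrow ≫ (v s).hom) ≫
        (IsColimit.coconePointUniqueUpToIso hq (sesProp_gIsCokernel hses)).hom = g := by
      have := IsColimit.comp_coconePointUniqueUpToIso_hom hq (sesProp_gIsCokernel hses)
        WalkingParallelPair.one
      simpa using this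
    refine Prod.ext ?_ ?_
    · simp only [Iso.trans_hom, Iso.symm_hom, Category.assoc, Iso.hom_inv_id_assoc]
      exact Subobject.underlyingIso_arrow f
    · simpa using hgprop

lemma card_sesPairs (B Z C : A) :
    Nat.card (SesPairs B Z C) = hall Z B C * autCard B * autCard Z := by
  rw [← Nat.card_congr (sesPairsEquiv B Z C)]
  rw [Nat.card_prod, Nat.card_prod, hall_eq, autCard, autCard, mul_assoc]

/-! ## The triple structure as a product of SES-pair sets -/

def tripleEquiv (A1 A2 X S M N : ZMod t → A) (i : ZMod t) :
    TripleSES A1 A2 X S M N i ≃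
      SesPairs (S i) (N i) (A2 i) × SesPairs (N i) (M i) (X i) ×
        SesPairs (M i) (S (i + 1)) (A1 i) where
  toFun p := ⟨⟨(p.f1, p.g1), p.ses1⟩, ⟨(p.f2, p.g2), p.ses2⟩, ⟨(p.f3, p.g3), p.ses3⟩⟩
  invFun q := ⟨q.1.1.1, q.1.1.2, q.2.1.1.1, q.2.1.1.2, q.2.2.1.1, q.2.2.1.2,
    q.1.2, q.2.1.2, q.2.2.2⟩
  left_inv p := rfl
  right_inv q := rfl

/-! ## `Φ` lands in `G` -/

lemma phi_mem (A1 A2 X S M N : ZMod t → A) (p : TT A1 A2 X S M N) :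
    Phi A1 A2 X S M N p ∈ GSet A1 A2 X S M N := by
  refine ⟨fun i => ⟨?_, ?_, ?_⟩, fun i => ⟨⟨?_⟩, ⟨?_⟩, ⟨?_⟩⟩⟩
  · haveI := sesProp_epi (p i).ses1
    haveI := sesProp_mono (p i).ses3
    exact (exactProp_comp_mono_iff _ _ _).2
      ((exactProp_epi_comp_iff _ _ _).2 (sesProp_exactProp (p i).ses2))
  · haveI := sesProp_epi (p i).ses2
    haveI := sesProp_mono (p (i + 1)).ses1
    exact (exactProp_comp_mono_iff _ _ _).2
      ((exactProp_epi_comp_iff _ _ _).2 (sesProp_exactProp (p i).ses3))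
  · haveI := sesProp_epi (p i).ses3
    haveI := sesProp_mono (p (i + 1)).ses2
    exact (exactProp_comp_mono_iff _ _ _).2
      ((exactProp_epi_comp_iff _ _ _).2 (sesProp_exactProp (p (i + 1)).ses1))
  · -- image ≅ S (i+1)
    haveI := sesProp_epi (p i).ses3
    haveI := sesProp_mono (p (i + 1)).ses1
    haveI : StrongEpi (p i).g3 := strongEpi_of_epi _
    exact (image.isoStrongEpiMono (p i).g3 ((p (i + 1)).f1) rfl).symm
  · -- kernel ≅ M i
    haveI := sesProp_epi (p i).ses3
    haveI := sesProp_mono (p (i + 1)).ses1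
    haveI := sesProp_mono (p i).ses3
    exact kernelCompMono (p i).g3 ((p (i + 1)).f1) ≪≫
      IsLimit.conePointUniqueUpToIso (kernelIsKernel (p i).g3) (sesProp_fIsKernel (p i).ses3)
  · -- cokernel ≅ N (i+1)
    haveI := sesProp_epi (p i).ses3
    haveI := sesProp_mono (p (i + 1)).ses1
    haveI := sesProp_epi (p (i + 1)).ses1
    exact cokernelEpiComp (p i).g3 ((p (i + 1)).f1) ≪≫
      IsColimit.coconePointUniqueUpToIso (cokernelIsCokernel ((p (i + 1)).f1))
        (sesProp_gIsCokernel (p (i + 1)).ses1)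

/-! ## Construction of a preimage of an exact periodic complex -/

section Back

variable [NeZero t] (A1 A2 X S M N : ZMod t → A) {r : Raw A1 A2 X}
  (hr : r ∈ GSet A1 A2 X S M N)

/-- transport of a family of morphisms along an index equality. -/
lemma fam_congr {U V : ZMod t → A} (φ : ∀ i : ZMod t, U i ⟶ V i) {j j' : ZMod t} (e : j = j') :
    φ j' = eqToHom (congrArg U e).symm ≫ φ j ≫ eqToHom (congrArg V e) := by
  subst e; simp

def idx (j : ZMod t) : ZMod t := j - 1

lemma idx_succ (j : ZMod t) : idx j + 1 = j := by
  show j - 1 + 1 = j; ring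

def cσ (i : ZMod t) : Limits.image (r i).h ≅ S (i + 1) := ((hr.2 i).1).some
def cμ (i : ZMod t) : kernel (r i).h ≅ M i := ((hr.2 i).2.1).some
def cν (i : ZMod t) : cokernel (r i).h ≅ N (i + 1) := ((hr.2 i).2.2).some

def wn (i : ZMod t) : (r i).n ≫ (r i).h = 0 := ((hr.1 i).2.1).choose
def wm (i : ZMod t) : (r i).h ≫ (r (i + 1)).m = 0 := ((hr.1 i).2.2).choose

def F1 (i : ZMod t) : S (i + 1) ⟶ A2 (i + 1) :=
  (cσ A1 A2 X S M N hr i).inv ≫ Limits.image.ι (r i).h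
def G1 (i : ZMod t) : A2 (i + 1) ⟶ N (i + 1) :=
  cokernel.π (r i).h ≫ (cν A1 A2 X S M N hr i).hom
def F2 (i : ZMod t) : N (i + 1) ⟶ X (i + 1) :=
  (cν A1 A2 X S M N hr i).inv ≫
    cokernel.desc (r i).h ((r (i + 1)).m) (wm A1 A2 X S M N hr i)
def g2f (i : ZMod t) : X i ⟶ M i :=
  kernel.lift (r i).h (r i).n (wn A1 A2 X S M N hr i) ≫ (cμ A1 A2 X S M N hr i).hom
def f3f (i : ZMod t) : M i ⟶ A1 i :=
  (cμ A1 A2 X S M N hr i).inv ≫ kernel.ι (r i).h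
def g3f (i : ZMod t) : A1 i ⟶ S (i + 1) :=
  factorThruImage (r i).h ≫ (cσ A1 A2 X S M N hr i).hom

lemma SES1 (i : ZMod t) : sesProp (F1 A1 A2 X S M N hr i) (G1 A1 A2 X S M N hr i) := by
  have := sesProp_conj (sesProp_image_cokernel (r i).h)
    (cσ A1 A2 X S M N hr i).symm (Iso.refl _) (cν A1 A2 X S M N hr i)
  simpa [F1, G1] using this

lemma SES3 (i : ZMod t) : sesProp (f3f A1 A2 X S M N hr i) (g3f A1 A2 X S M N hr i) := by
  have := sesProp_conj (sesProp_kernel_image (r i).h)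
    (cμ A1 A2 X S M N hr i).symm (Iso.refl _) (cσ A1 A2 X S M N hr i)
  simpa [f3f, g3f] using this

lemma SES2 (i : ZMod t) :
    sesProp (F2 A1 A2 X S M N hr i) (g2f A1 A2 X S M N hr (i + 1)) := by
  set D := cokernel.desc (r i).h ((r (i + 1)).m) (wm A1 A2 X S M N hr i) with hD
  set L := kernel.lift (r (i + 1)).h ((r (i + 1)).n) (wn A1 A2 X S M N hr (i + 1)) with hL
  have hπD : cokernel.π (r i).h ≫ D = (r (i + 1)).m := cokernel.π_desc _ _ _
  have hLι : L ≫ kernel.ι (r (i + 1)).h = (r (i + 1)).n := kernel.lift_ι _ _ _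
  haveI hmD : Mono D := by
    obtain ⟨w, hx⟩ := (hr.1 i).2.2
    exact (ShortComplex.exact_iff_mono_cokernel_desc _).1 hx
  haveI heL : Epi L := by
    obtain ⟨w, hx⟩ := (hr.1 (i + 1)).2.1
    exact (ShortComplex.exact_iff_epi_kernel_lift _).1 hx
  have hex : exactProp D L := by
    have h0 : exactProp ((r (i + 1)).m) ((r (i + 1)).n) := (hr.1 (i + 1)).1
    rw [← hπD] at h0
    rw [← hLι] at h0
    rw [exactProp_comp_mono_iff] at h0
    rw [exactProp_epi_comp_iff] at h0
    exact h0
  have hsesDL : sesProp D L := by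
    obtain ⟨w, hx⟩ := hex
    exact ⟨w, { exact := hx }⟩
  have := sesProp_conj hsesDL
    (cν A1 A2 X S M N hr i).symm (Iso.refl _) (cμ A1 A2 X S M N hr (i + 1))
  simpa [F2, g2f, hD, hL] using this

/-- The preimage of an exact periodic complex under `Φ`. -/
def backMap : TT A1 A2 X S M N := fun j =>
  { f1 := eqToHom (congrArg S (idx_succ j)).symm ≫ F1 A1 A2 X S M N hr (idx j) ≫
      eqToHom (congrArg A2 (idx_succ j))
    g1 := eqToHom (congrArg A2 (idx_succ j)).symm ≫ G1 A1 A2 X S M N hr (idx j) ≫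
      eqToHom (congrArg N (idx_succ j))
    f2 := eqToHom (congrArg N (idx_succ j)).symm ≫ F2 A1 A2 X S M N hr (idx j) ≫
      eqToHom (congrArg X (idx_succ j))
    g2 := g2f A1 A2 X S M N hr j
    f3 := f3f A1 A2 X S M N hr j
    g3 := g3f A1 A2 X S M N hr j
    ses1 := by
      exact sesProp_conj (SES1 A1 A2 X S M N hr (idx j))
        (eqToIso (congrArg S (idx_succ j))).symm (eqToIso (congrArg A2 (idx_succ j)))
        (eqToIso (congrArg N (idx_succ j)))
    ses2 := by
      rw [fam_congr (g2f A1 A2 X S M N hr) (idx_succ j)]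
      exact sesProp_conj (SES2 A1 A2 X S M N hr (idx j))
        (eqToIso (congrArg N (idx_succ j))).symm (eqToIso (congrArg X (idx_succ j)))
        (eqToIso (congrArg M (idx_succ j)))
    ses3 := SES3 A1 A2 X S M N hr j }

lemma phi_backMap : Phi A1 A2 X S M N (backMap A1 A2 X S M N hr) = r := by
  funext j
  have hback : r j = RawTriple.mk (r j).m (r j).n (r j).h := rfl
  rw [hback]
  show RawTriple.mk _ _ _ = _
  congr 1
  · -- g1 ≫ f2 = m
    show (eqToHom (congrArg A2 (idx_succ j)).symm ≫ G1 A1 A2 X S M N hr (idx j) ≫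
        eqToHom (congrArg N (idx_succ j))) ≫
      (eqToHom (congrArg N (idx_succ j)).symm ≫ F2 A1 A2 X S M N hr (idx j) ≫
        eqToHom (congrArg X (idx_succ j))) = (r j).m
    rw [fam_congr (fun i => (r i).m) (idx_succ j)]
    simp [G1, F2]
  · -- g2 ≫ f3 = n
    show g2f A1 A2 X S M N hr j ≫ f3f A1 A2 X S M N hr j = (r j).n
    simp [g2f, f3f]
  · -- g3 ≫ f1 = h
    have e' : idx (j + 1) = j := by show j + 1 - 1 = j; ring
    have hf1 : (backMap A1 A2 X S M N hr (j + 1)).f1 = F1 A1 A2 X S M N hr j :=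
      (fam_congr (fun i => F1 A1 A2 X S M N hr i) e').symm
    show g3f A1 A2 X S M N hr j ≫ (backMap A1 A2 X S M N hr (j + 1)).f1 = (r j).h
    rw [hf1]
    simp [g3f, F1]

end Back

/-! ## Twisting by automorphisms -/

section Twist

variable [NeZero t] (A1 A2 X S M N : ZMod t → A)

lemma iso_inv_inj {X Y : A} {e e' : X ≅ Y} (h : e.inv = e'.inv) : e = e' := by
  have : e.symm = e'.symm := Iso.ext h
  simpa using congrArg Iso.symm this

def twist (p : TT A1 A2 X S M N) (a : ∀ i : ZMod t, Aut (M i) × Aut (N i) × Aut (S i)) :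
    TT A1 A2 X S M N := fun i =>
  { f1 := ((a i).2.2).inv ≫ (p i).f1
    g1 := (p i).g1 ≫ ((a i).2.1).hom
    f2 := ((a i).2.1).inv ≫ (p i).f2
    g2 := (p i).g2 ≫ ((a i).1).hom
    f3 := ((a i).1).inv ≫ (p i).f3
    g3 := (p i).g3 ≫ ((a (i + 1)).2.2).hom
    ses1 := by
      have := sesProp_conj (p i).ses1 ((a i).2.2).symm (Iso.refl _) ((a i).2.1)
      rw [Iso.refl_hom, Iso.refl_inv, Category.comp_id, Category.id_comp] at this
      exact this
    ses2 := by
      have := sesProp_conj (p i).ses2 ((a i).2.1).symm (Iso.refl _) ((a i).1)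
      rw [Iso.refl_hom, Iso.refl_inv, Category.comp_id, Category.id_comp] at this
      exact this
    ses3 := by
      have := sesProp_conj (p i).ses3 ((a i).1).symm (Iso.refl _) ((a (i + 1)).2.2)
      rw [Iso.refl_hom, Iso.refl_inv, Category.comp_id, Category.id_comp] at this
      exact this }

lemma phi_twist (p : TT A1 A2 X S M N) (a : ∀ i : ZMod t, Aut (M i) × Aut (N i) × Aut (S i)) :
    Phi A1 A2 X S M N (twist A1 A2 X S M N p a) = Phi A1 A2 X S M N p := by
  funext i
  show RawTriple.mk _ _ _ = RawTriple.mk _ _ _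
  congr 1
  · show ((p i).g1 ≫ ((a i).2.1).hom) ≫ (((a i).2.1).inv ≫ (p i).f2) = (p i).g1 ≫ (p i).f2
    rw [Category.assoc, Iso.hom_inv_id_assoc (a i).2.1]
  · show ((p i).g2 ≫ ((a i).1).hom) ≫ (((a i).1).inv ≫ (p i).f3) = (p i).g2 ≫ (p i).f3
    rw [Category.assoc, Iso.hom_inv_id_assoc (a i).1]
  · show ((p i).g3 ≫ ((a (i + 1)).2.2).hom) ≫ (((a (i + 1)).2.2).inv ≫ (p (i + 1)).f1)
      = (p i).g3 ≫ (p (i + 1)).f1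
    rw [Category.assoc, Iso.hom_inv_id_assoc (a (i + 1)).2.2]

lemma tripleSES_ext {i : ZMod t} {a b : TripleSES A1 A2 X S M N i}
    (h1 : a.f1 = b.f1) (h2 : a.g1 = b.g1) (h3 : a.f2 = b.f2) (h4 : a.g2 = b.g2)
    (h5 : a.f3 = b.f3) (h6 : a.g3 = b.g3) : a = b := by
  cases a; cases b
  dsimp only at h1 h2 h3 h4 h5 h6
  subst h1; subst h2; subst h3; subst h4; subst h5; subst h6
  rfl

def thetaEquiv :
    (GSet A1 A2 X S M N) × (∀ i : ZMod t, Aut (M i) × Aut (N i) × Aut (S i)) ≃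
      TT A1 A2 X S M N := by
  refine Equiv.ofBijective
    (fun q => twist A1 A2 X S M N (backMap A1 A2 X S M N q.1.2) q.2) ⟨?_, ?_⟩
  · rintro ⟨⟨r, hr⟩, a⟩ ⟨⟨r', hr'⟩, a'⟩ hEq
    have hrr : r = r' := by
      have h1 := congrArg (Phi A1 A2 X S M N) hEq
      rw [phi_twist, phi_twist, phi_backMap, phi_backMap] at h1
      exact h1
    subst hrr
    have ha : a = a' := by
      funext i
      set p := backMap A1 A2 X S M N hr with hp
      have e1 := congrArg (fun q : TT A1 A2 X S M N => (q i).f1) hEq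
      have e2 := congrArg (fun q : TT A1 A2 X S M N => (q i).f2) hEq
      have e3 := congrArg (fun q : TT A1 A2 X S M N => (q i).f3) hEq
      dsimp only [twist] at e1 e2 e3
      haveI hm1 : Mono (backMap A1 A2 X S M N hr i).f1 := sesProp_mono (backMap A1 A2 X S M N hr i).ses1
      haveI hm2 : Mono (backMap A1 A2 X S M N hr i).f2 := sesProp_mono (backMap A1 A2 X S M N hr i).ses2
      haveI hm3 : Mono (backMap A1 A2 X S M N hr i).f3 := sesProp_mono (backMap A1 A2 X S M N hr i).ses3
      have hS : (a i).2.2 = (a' i).2.2 := by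
        apply iso_inv_inj
        rw [← cancel_mono ((backMap A1 A2 X S M N hr i).f1)]
        exact e1
      have hN : (a i).2.1 = (a' i).2.1 := by
        apply iso_inv_inj
        rw [← cancel_mono ((backMap A1 A2 X S M N hr i).f2)]
        exact e2
      have hM : (a i).1 = (a' i).1 := by
        apply iso_inv_inj
        rw [← cancel_mono ((backMap A1 A2 X S M N hr i).f3)]
        exact e3
      exact Prod.ext hM (Prod.ext hN hS)
    rw [ha]
  · intro p
    set r := Phi A1 A2 X S M N p with hrdef
    have hr : r ∈ GSet A1 A2 X S M N := phi_mem A1 A2 X S M N p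
    set p0 := backMap A1 A2 X S M N hr with hp0
    have hphi0 : Phi A1 A2 X S M N p0 = Phi A1 A2 X S M N p := phi_backMap A1 A2 X S M N hr
    -- N-components
    have hm_eq : ∀ i, (p0 i).g1 ≫ (p0 i).f2 = (p i).g1 ≫ (p i).f2 := fun i =>
      congrArg (fun q : Raw A1 A2 X => (q i).m) hphi0
    have hn_eq : ∀ i, (p0 i).g2 ≫ (p0 i).f3 = (p i).g2 ≫ (p i).f3 := fun i =>
      congrArg (fun q : Raw A1 A2 X => (q i).n) hphi0
    have hh_eq : ∀ i, (p0 i).g3 ≫ (p0 (i + 1)).f1 = (p i).g3 ≫ (p (i + 1)).f1 := fun i =>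
      congrArg (fun q : Raw A1 A2 X => (q i).h) hphi0
    have hexν : ∀ i, ∃ e : N i ≅ N i,
        (p i).g1 = (p0 i).g1 ≫ e.hom ∧ (p i).f2 = e.inv ≫ (p0 i).f2 := by
      intro i
      haveI := sesProp_epi (p0 i).ses1
      haveI := sesProp_epi (p i).ses1
      haveI := sesProp_mono (p0 i).ses2
      haveI := sesProp_mono (p i).ses2
      exact exists_factor_iso (hm_eq i)
    have hexμ : ∀ i, ∃ e : M i ≅ M i,
        (p i).g2 = (p0 i).g2 ≫ e.hom ∧ (p i).f3 = e.inv ≫ (p0 i).f3 := by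
      intro i
      haveI := sesProp_epi (p0 i).ses2
      haveI := sesProp_epi (p i).ses2
      haveI := sesProp_mono (p0 i).ses3
      haveI := sesProp_mono (p i).ses3
      exact exists_factor_iso (hn_eq i)
    choose ν hν1 hν2 using hexν
    choose μ hμ1 hμ2 using hexμ
    have hexs : ∀ i, ∃ e : S i ≅ S i, (p i).f1 = e.inv ≫ (p0 i).f1 := by
      intro i
      refine exists_kernel_iso (p0 i).ses1 ?_ (sesProp_mono (p i).ses1) ?_
      · rw [← cancel_mono (ν i).hom, Category.assoc, ← hν1 i, sesProp_zero (p i).ses1,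
          zero_comp]
      · intro W k hk
        have hk' : k ≫ (p i).g1 = 0 := by
          rw [hν1 i, ← Category.assoc, hk, zero_comp]
        obtain ⟨l, hl⟩ := KernelFork.IsLimit.lift' (sesProp_fIsKernel (p i).ses1) k hk'
        exact ⟨l, hl⟩
    choose sa hsa using hexs
    have hg3 : ∀ i, (p i).g3 = (p0 i).g3 ≫ (sa (i + 1)).hom := by
      intro i
      haveI := sesProp_mono (p0 (i + 1)).ses1
      have h1 : (p0 i).g3 = (p i).g3 ≫ (sa (i + 1)).inv := by
        rw [← cancel_mono ((p0 (i + 1)).f1)]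
        rw [Category.assoc, ← hsa (i + 1)]
        exact hh_eq i
      rw [h1, Category.assoc, Iso.inv_hom_id, Category.comp_id]
    refine ⟨⟨⟨r, hr⟩, fun i => (μ i, ν i, sa i)⟩, ?_⟩
    funext i
    refine tripleSES_ext A1 A2 X S M N ?_ ?_ ?_ ?_ ?_ ?_
    · exact (hsa i).symm
    · exact (hν1 i).symm
    · exact (hν2 i).symm
    · exact (hμ1 i).symm
    · exact (hμ2 i).symm
    · exact (hg3 i).symm

end Twist

/-! ## Cardinalities -/

section Cards

lemma finite_aut {X : A} (hfin : Finite (X ⟶ X)) : Finite (Aut X) := by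
  apply Finite.of_injective (fun a : Aut X => ((a.hom, a.inv) : (X ⟶ X) × (X ⟶ X)))
  intro a b hab
  exact Iso.ext (congrArg Prod.fst hab)

lemma card_tripleSES [NeZero t] (A1 A2 X S M N : ZMod t → A) (i : ZMod t) :
    Nat.card (TripleSES A1 A2 X S M N i) =
      hall (N i) (S i) (A2 i) * autCard (S i) * autCard (N i) *
        ((hall (M i) (N i) (X i) * autCard (N i) * autCard (M i)) *
          (hall (S (i + 1)) (M i) (A1 i) * autCard (M i) * autCard (S (i + 1)))) := by
  rw [Nat.card_congr (tripleEquiv A1 A2 X S M N i), Nat.card_prod, Nat.card_prod,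
    card_sesPairs, card_sesPairs, card_sesPairs]

lemma card_TT [NeZero t] (A1 A2 X S M N : ZMod t → A) :
    Nat.card (TT A1 A2 X S M N)
      = ∏ i : ZMod t,
          hall (S (i + 1)) (M i) (A1 i) * hall (M i) (N i) (X i) *
            hall (N i) (S i) (A2 i) *
            (autCard (M i)) ^ 2 * (autCard (N i)) ^ 2 * (autCard (S i)) ^ 2 := by
  have h0 : Nat.card (TT A1 A2 X S M N)
      = ∏ i : ZMod t, Nat.card (TripleSES A1 A2 X S M N i) := Nat.card_pi
  rw [h0]
  have hshift : (∏ i : ZMod t, autCard (S (i + 1))) = ∏ i : ZMod t, autCard (S i) :=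
    Fintype.prod_equiv (Equiv.addRight (1 : ZMod t)) _ _ (fun i => rfl)
  calc (∏ i : ZMod t, Nat.card (TripleSES A1 A2 X S M N i))
      = ∏ i : ZMod t,
          (hall (S (i + 1)) (M i) (A1 i) * hall (M i) (N i) (X i) *
            hall (N i) (S i) (A2 i) *
            (autCard (M i)) ^ 2 * (autCard (N i)) ^ 2 * autCard (S i)) *
          autCard (S (i + 1)) :=
        Finset.prod_congr rfl (fun i _ => by rw [card_tripleSES]; ring)
    _ = (∏ i : ZMod t,
          (hall (S (i + 1)) (M i) (A1 i) * hall (M i) (N i) (X i) *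
            hall (N i) (S i) (A2 i) *
            (autCard (M i)) ^ 2 * (autCard (N i)) ^ 2 * autCard (S i))) *
          ∏ i : ZMod t, autCard (S (i + 1)) := Finset.prod_mul_distrib
    _ = (∏ i : ZMod t,
          (hall (S (i + 1)) (M i) (A1 i) * hall (M i) (N i) (X i) *
            hall (N i) (S i) (A2 i) *
            (autCard (M i)) ^ 2 * (autCard (N i)) ^ 2 * autCard (S i))) *
          ∏ i : ZMod t, autCard (S i) := by rw [hshift]
    _ = ∏ i : ZMod t,
          (hall (S (i + 1)) (M i) (A1 i) * hall (M i) (N i) (X i) *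
            hall (N i) (S i) (A2 i) *
            (autCard (M i)) ^ 2 * (autCard (N i)) ^ 2 * autCard (S i)) *
          autCard (S i) := Finset.prod_mul_distrib.symm
    _ = _ := Finset.prod_congr rfl (fun i _ => by ring)

end Cards

theorem counting_triples_of_short_exact_sequences
    (k : Type) [Field k] [Fintype k]
    (A : Type) [SmallCategory A] [Abelian A] [CategoryTheory.Linear k A]
    [HasExt.{0} A]
    (hfinHom : ∀ X Y : A, Finite (X ⟶ Y))
    (hfinExt : ∀ X Y : A, Finite (Abelian.Ext X Y 1))
    (t : ℕ) [NeZero t] (ht : Odd t)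
    (A1 A2 X S M N : ZMod t → A) :
    -- `Φ` is a surjection from `T` onto `G_{M^•,N^•}`
    Set.range (Phi A1 A2 X S M N) = GSet A1 A2 X S M N
    -- `|T| = ∏ᵢ g^{A₁^i}_{S^{i+1} M^i} g^{X^i}_{M^i N^i} g^{A₂^i}_{N^i S^i} a²_{M^i} a²_{N^i} a²_{S^i}`
    ∧ Nat.card (TT A1 A2 X S M N)
        = ∏ i : ZMod t,
            hall (S (i + 1)) (M i) (A1 i) * hall (M i) (N i) (X i) *
              hall (N i) (S i) (A2 i) *
              (autCard (M i)) ^ 2 * (autCard (N i)) ^ 2 * (autCard (S i)) ^ 2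
    -- `|G_{M^•,N^•}| = ∏ᵢ g^{A₁^i}_{S^{i+1} M^i} g^{X^i}_{M^i N^i} g^{A₂^i}_{N^i S^i} a_{M^i} a_{N^i} a_{S^i}`
    ∧ Nat.card (GSet A1 A2 X S M N)
        = ∏ i : ZMod t,
            hall (S (i + 1)) (M i) (A1 i) * hall (M i) (N i) (X i) *
              hall (N i) (S i) (A2 i) *
              autCard (M i) * autCard (N i) * autCard (S i) := by
  classical
  have part1 : Set.range (Phi A1 A2 X S M N) = GSet A1 A2 X S M N := by
    ext r
    constructor
    · rintro ⟨p, rfl⟩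
      exact phi_mem A1 A2 X S M N p
    · intro hr
      exact ⟨backMap A1 A2 X S M N hr, phi_backMap A1 A2 X S M N hr⟩
  have part2 := card_TT A1 A2 X S M N
  refine ⟨part1, part2, ?_⟩
  -- the torsor decomposition
  have hθ := Nat.card_congr (thetaEquiv A1 A2 X S M N)
  rw [Nat.card_prod] at hθ
  have hK : Nat.card (∀ i : ZMod t, Aut (M i) × Aut (N i) × Aut (S i))
      = ∏ i : ZMod t, autCard (M i) * (autCard (N i) * autCard (S i)) := by
    rw [Nat.card_pi]
    exact Finset.prod_congr rfl (fun i _ => by rw [Nat.card_prod, Nat.card_prod]; rfl)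
  rw [hK] at hθ
  -- positivity
  have hpos : ∀ Y : A, 0 < autCard Y := by
    intro Y
    haveI : Finite (Aut Y) := finite_aut (hfinHom Y Y)
    haveI : Nonempty (Aut Y) := ⟨Iso.refl Y⟩
    exact Nat.card_pos
  have hPpos : 0 < ∏ i : ZMod t, autCard (M i) * (autCard (N i) * autCard (S i)) :=
    Finset.prod_pos (fun i _ => mul_pos (hpos _) (mul_pos (hpos _) (hpos _)))
  apply Nat.eq_of_mul_eq_mul_right hPpos
  rw [hθ, part2, ← Finset.prod_mul_distrib]
  exact Finset.prod_congr rfl (fun i _ => by ring)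


end GreenDH
end
end
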